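/- Let d ≥ 2 and let B, C, D, E, F' ∈ ℂ[x₀,x₁,x₂,x₃] be polynomials in x₀, x₁ only, homogeneous of degrees d−1, d−1, d−2, d−2, d−2 respectively. Set Δ₁ = D·F' − E², Δ₂ = C·E − B·F', Δ₃ = B·E − C·D, and define the four polynomials T₀ = −x₀·Δ₁, T₁ = −x₁·Δ₁, T₂ = x₂·Δ₁ − 2Δ₂, T₃ = x₃·Δ₁ − 2Δ₃ (each homogeneous of degree 2d−3). Then substituting (T₀, T₁, T₂, T₃) for (x₀, x₁, x₂, x₃) in each Tᵢ yields Tᵢ(T₀,T₁,T₂,T₃) = Δ₁^{2d−2} · xᵢ for i = 0, 1, 2, 3. In particular, the rational self-map of P³ defined by [x] ↦ [T₀(x), T₁(x), T₂(x), T₃(x)] is a birational involution. -/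

import Mathlib

open MvPolynomial

lemma aeval_mul_of_isHomogeneous {σ : Type*} {A : Type*} [CommRing A] [Algebra ℂ A]
    {n : ℕ} {p : MvPolynomial σ ℂ} (hp : p.IsHomogeneous n)
    (c : A) (f : σ → A) :
    aeval (fun i => c * f i) p = c ^ n * aeval f p := by
  rw [p.as_sum, map_sum, map_sum, Finset.mul_sum]
  apply Finset.sum_congr rfl
  intro m hm
  rw [aeval_monomial, aeval_monomial]
  have hdeg : (∑ i ∈ m.support, m i) = n := by
    have := hp (mem_support_iff.mp hm)
    simpa [Finsupp.weight_apply, Finsupp.sum] using this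
  rw [Finsupp.prod, Finsupp.prod]
  simp_rw [mul_pow]
  rw [Finset.prod_mul_distrib, Finset.prod_pow_eq_pow_sum, hdeg]
  ring

/-- The Cremona transformation `Θ_Γ` of `ℙ³` given by the four degree-`(2d−3)`
forms `T₀ = −x₀Δ₁`, `T₁ = −x₁Δ₁`, `T₂ = x₂Δ₁ − 2Δ₂`, `T₃ = x₃Δ₁ − 2Δ₃`
satisfies `Tᵢ(T₀,T₁,T₂,T₃) = Δ₁^{2d−2}·xᵢ`, hence is a birational involution. -/
theorem theta_gamma_is_involution (d : ℕ) (hd : 2 ≤ d)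
    (B₂ C₂ D₂ E₂ F₂ : MvPolynomial (Fin 2) ℂ)
    (hB₂ : B₂.IsHomogeneous (d - 1)) (hC₂ : C₂.IsHomogeneous (d - 1))
    (hD₂ : D₂.IsHomogeneous (d - 2)) (hE₂ : E₂.IsHomogeneous (d - 2))
    (hF₂ : F₂.IsHomogeneous (d - 2))
    (B C D E F' Δ₁ Δ₂ Δ₃ : MvPolynomial (Fin 4) ℂ)
    (hB : B = rename (Fin.castLE (by norm_num)) B₂)
    (hC : C = rename (Fin.castLE (by norm_num)) C₂)
    (hD : D = rename (Fin.castLE (by norm_num)) D₂)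
    (hE : E = rename (Fin.castLE (by norm_num)) E₂)
    (hF : F' = rename (Fin.castLE (by norm_num)) F₂)
    (hΔ₁ : Δ₁ = D * F' - E ^ 2)
    (hΔ₂ : Δ₂ = C * E - B * F')
    (hΔ₃ : Δ₃ = B * E - C * D)
    (T : Fin 4 → MvPolynomial (Fin 4) ℂ)
    (hT : T = ![-(X 0 * Δ₁), -(X 1 * Δ₁), X 2 * Δ₁ - 2 * Δ₂, X 3 * Δ₁ - 2 * Δ₃]) :
    (∀ i, (T i).IsHomogeneous (2 * d - 3)) ∧
    (∀ i, aeval T (T i) = Δ₁ ^ (2 * d - 2) * X i) := by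
  -- homogeneity of the ingredients
  have hBh : B.IsHomogeneous (d - 1) := hB ▸ hB₂.rename_isHomogeneous
  have hCh : C.IsHomogeneous (d - 1) := hC ▸ hC₂.rename_isHomogeneous
  have hDh : D.IsHomogeneous (d - 2) := hD ▸ hD₂.rename_isHomogeneous
  have hEh : E.IsHomogeneous (d - 2) := hE ▸ hE₂.rename_isHomogeneous
  have hFh : F'.IsHomogeneous (d - 2) := hF ▸ hF₂.rename_isHomogeneous
  have e44 : 2 * d - 4 = (d - 2) + (d - 2) := by omega
  have e33 : 2 * d - 3 = (d - 1) + (d - 2) := by omega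
  have hΔ₁h : Δ₁.IsHomogeneous (2 * d - 4) := by
    rw [hΔ₁, e44]
    have h2 : (E ^ 2).IsHomogeneous ((d - 2) + (d - 2)) := by
      have := hEh.pow 2
      rwa [(by omega : (d - 2) * 2 = (d - 2) + (d - 2))] at this
    exact (hDh.mul hFh).sub h2
  have hΔ₂h : Δ₂.IsHomogeneous (2 * d - 3) := by
    rw [hΔ₂, e33]; exact (hCh.mul hEh).sub (hBh.mul hFh)
  have hΔ₃h : Δ₃.IsHomogeneous (2 * d - 3) := by
    rw [hΔ₃, e33]; exact (hBh.mul hEh).sub (hCh.mul hDh)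
  have hXΔ : ∀ i : Fin 4, (X i * Δ₁ : MvPolynomial (Fin 4) ℂ).IsHomogeneous (2 * d - 3) := by
    intro i
    have := (isHomogeneous_X ℂ i).mul hΔ₁h
    rwa [(by omega : 1 + (2 * d - 4) = 2 * d - 3)] at this
  have h2Δ₂ : ((2 : MvPolynomial (Fin 4) ℂ) * Δ₂).IsHomogeneous (2 * d - 3) := by
    have := (isHomogeneous_C (Fin 4) (2 : ℂ)).mul hΔ₂h
    rw [zero_add] at this
    rwa [show (MvPolynomial.C (2 : ℂ) : MvPolynomial (Fin 4) ℂ) = 2 from map_ofNat _ 2] at this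
  have h2Δ₃ : ((2 : MvPolynomial (Fin 4) ℂ) * Δ₃).IsHomogeneous (2 * d - 3) := by
    have := (isHomogeneous_C (Fin 4) (2 : ℂ)).mul hΔ₃h
    rw [zero_add] at this
    rwa [show (MvPolynomial.C (2 : ℂ) : MvPolynomial (Fin 4) ℂ) = 2 from map_ofNat _ 2] at this
  -- values of T
  have hT0 : T 0 = -(X 0 * Δ₁) := by rw [hT]; rfl
  have hT1 : T 1 = -(X 1 * Δ₁) := by rw [hT]; rfl
  have hT2 : T 2 = X 2 * Δ₁ - 2 * Δ₂ := by rw [hT]; rfl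
  have hT3 : T 3 = X 3 * Δ₁ - 2 * Δ₃ := by rw [hT]; rfl
  -- key substitution fact for polynomials in x₀, x₁ only
  have key : ∀ (P₂ : MvPolynomial (Fin 2) ℂ) (k : ℕ), P₂.IsHomogeneous k →
      aeval T (rename (Fin.castLE (by norm_num : (2:ℕ) ≤ 4)) P₂) =
        (-Δ₁) ^ k * rename (Fin.castLE (by norm_num : (2:ℕ) ≤ 4)) P₂ := by
    intro P₂ k hk
    rw [aeval_rename]
    have hcomp : (T ∘ Fin.castLE (by norm_num : (2:ℕ) ≤ 4)) =
        fun i : Fin 2 => (-Δ₁) * X (Fin.castLE (by norm_num : (2:ℕ) ≤ 4) i) := by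
      funext i
      fin_cases i
      · show T 0 = -Δ₁ * X 0
        rw [hT0]; ring
      · show T 1 = -Δ₁ * X 1
        rw [hT1]; try ring
    rw [hcomp, aeval_mul_of_isHomogeneous hk]
    congr 1
    rw [← aeval_X_left_apply (rename _ P₂), aeval_rename]; rfl
  have hBT : aeval T B = (-Δ₁) ^ (d - 1) * B := by rw [hB]; exact key _ _ hB₂
  have hCT : aeval T C = (-Δ₁) ^ (d - 1) * C := by rw [hC]; exact key _ _ hC₂
  have hDT : aeval T D = (-Δ₁) ^ (d - 2) * D := by rw [hD]; exact key _ _ hD₂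
  have hET : aeval T E = (-Δ₁) ^ (d - 2) * E := by rw [hE]; exact key _ _ hE₂
  have hFT : aeval T F' = (-Δ₁) ^ (d - 2) * F' := by rw [hF]; exact key _ _ hF₂
  -- images of the minors
  have hΔ₁T : aeval T Δ₁ = Δ₁ ^ (2 * d - 3) := by
    rw [hΔ₁, map_sub, map_mul, map_pow, hDT, hFT, hET]
    have e1 : ((-Δ₁) ^ (d - 2) * D) * ((-Δ₁) ^ (d - 2) * F') - ((-Δ₁) ^ (d - 2) * E) ^ 2
        = (-Δ₁) ^ ((d-2) + (d-2)) * (D * F' - E ^ 2) := by rw [pow_add]; ring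
    rw [e1, ← hΔ₁]
    have heven : Even ((d-2) + (d-2)) := ⟨d-2, rfl⟩
    rw [heven.neg_pow]
    have : (d-2) + (d-2) + 1 = 2 * d - 3 := by omega
    rw [← this, pow_succ]
  have hΔ₂T : aeval T Δ₂ = -(Δ₁ ^ (2 * d - 3) * Δ₂) := by
    rw [hΔ₂, map_sub, map_mul, map_mul, hBT, hCT, hET, hFT]
    have e1 : ((-Δ₁) ^ (d - 1) * C) * ((-Δ₁) ^ (d - 2) * E) -
        ((-Δ₁) ^ (d - 1) * B) * ((-Δ₁) ^ (d - 2) * F')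
        = (-Δ₁) ^ ((d-1) + (d-2)) * (C * E - B * F') := by rw [pow_add]; ring
    rw [e1, ← hΔ₂]
    have hodd : Odd ((d-1) + (d-2)) := ⟨d-2, by omega⟩
    rw [hodd.neg_pow, ← e33]; ring
  have hΔ₃T : aeval T Δ₃ = -(Δ₁ ^ (2 * d - 3) * Δ₃) := by
    rw [hΔ₃, map_sub, map_mul, map_mul, hBT, hCT, hDT, hET]
    have e1 : ((-Δ₁) ^ (d - 1) * B) * ((-Δ₁) ^ (d - 2) * E) -
        ((-Δ₁) ^ (d - 1) * C) * ((-Δ₁) ^ (d - 2) * D)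
        = (-Δ₁) ^ ((d-1) + (d-2)) * (B * E - C * D) := by rw [pow_add]; ring
    rw [e1, ← hΔ₃]
    have hodd : Odd ((d-1) + (d-2)) := ⟨d-2, by omega⟩
    rw [hodd.neg_pow, ← e33]; ring
  have hpow : Δ₁ ^ (2 * d - 2) = Δ₁ ^ (2 * d - 3) * Δ₁ := by
    rw [← pow_succ]
    congr 1; omega
  constructor
  · intro i
    fin_cases i
    · show (T 0).IsHomogeneous (2 * d - 3)
      rw [hT0]; exact (hXΔ 0).neg
    · show (T 1).IsHomogeneous (2 * d - 3)
      rw [hT1]; exact (hXΔ 1).neg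
    · show (T 2).IsHomogeneous (2 * d - 3)
      rw [hT2]; exact (hXΔ 2).sub h2Δ₂
    · show (T 3).IsHomogeneous (2 * d - 3)
      rw [hT3]; exact (hXΔ 3).sub h2Δ₃
  · intro i
    fin_cases i
    · show aeval T (T 0) = Δ₁ ^ (2 * d - 2) * X 0
      rw [hT0, map_neg, map_mul, aeval_X, hΔ₁T, hT0, hpow]; ring
    · show aeval T (T 1) = Δ₁ ^ (2 * d - 2) * X 1
      rw [hT1, map_neg, map_mul, aeval_X, hΔ₁T, hT1, hpow]; ring
    · show aeval T (T 2) = Δ₁ ^ (2 * d - 2) * X 2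
      rw [hT2, map_sub, map_mul, map_mul, aeval_X, hΔ₁T, hΔ₂T, hT2, hpow]
      simp only [map_ofNat]
      ring
    · show aeval T (T 3) = Δ₁ ^ (2 * d - 2) * X 3
      rw [hT3, map_sub, map_mul, map_mul, aeval_X, hΔ₁T, hΔ₃T, hT3, hpow]
      simp only [map_ofNat]
      ring
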